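/- For Hermitian n×n matrices L and A and real-valued functions f, g on the spectrum of A, we have Tr[f(A) L g(A) L] ≤ (1/2) Tr[f(A)² L² + g(A)² L²]. -/
import Mathlib

open Matrix ComplexOrder in
theorem trace_fALgAL_le_half_trace_sq_sq {n : ℕ} (L A : Matrix (Fin n) (Fin n) ℂ)
    (hL : L.IsHermitian) (hA : A.IsHermitian) (f g : ℝ → ℝ) :
    trace (hA.cfc f * L * hA.cfc g * L) ≤
      (1 / 2 : ℂ) * trace (hA.cfc f ^ 2 * L ^ 2 + hA.cfc g ^ 2 * L ^ 2) := by
  set F := hA.cfc f with hFdef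
  set G := hA.cfc g with hGdef
  have hF : Fᴴ = F := by
    rw [hFdef, ← hA.cfc_eq]; exact (cfc_predicate f A : (cfc f A).IsHermitian)
  have hG : Gᴴ = G := by
    rw [hGdef, ← hA.cfc_eq]; exact (cfc_predicate g A : (cfc g A).IsHermitian)
  set B := F * L - L * G with hBdef
  have hBH : Bᴴ = L * F - G * L := by
    simp [hBdef, conjTranspose_sub, conjTranspose_mul, hF, hG, hL.eq]
  have key : (0 : ℂ) ≤ trace (B * Bᴴ) := by
    rw [trace]
    refine Finset.sum_nonneg fun i _ => ?_
    rw [diag_apply, mul_apply]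
    exact Finset.sum_nonneg fun j _ => by
      simpa [conjTranspose_apply] using mul_star_self_nonneg (B i j)
  have h1 : trace (L * G * (L * F)) = trace (F * L * G * L) := by
    rw [show L * G * (L * F) = L * G * L * F by simp [mul_assoc], trace_mul_comm,
      show F * (L * G * L) = F * L * G * L by simp [mul_assoc]]
  have h2 : trace (F * L * (L * F)) = trace (F ^ 2 * L ^ 2) := by
    rw [show F * L * (L * F) = F * (L * L * F) by simp [mul_assoc], trace_mul_comm,
      show L * L * F * F = L ^ 2 * F ^ 2 by simp [pow_two, mul_assoc], trace_mul_comm]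
  have h3 : trace (L * G * (G * L)) = trace (G ^ 2 * L ^ 2) := by
    rw [show L * G * (G * L) = L * (G * G * L) by simp [mul_assoc], trace_mul_comm,
      show G * G * L * L = G ^ 2 * L ^ 2 by simp [pow_two, mul_assoc]]
  have h4 : trace (F * L * (G * L)) = trace (F * L * G * L) := by simp [mul_assoc]
  have expand : trace (B * Bᴴ) = trace (F ^ 2 * L ^ 2) + trace (G ^ 2 * L ^ 2)
      - 2 * trace (F * L * G * L) := by
    rw [hBH, hBdef, sub_mul, mul_sub, mul_sub, trace_sub, trace_sub, trace_sub,
      h1, h2, h3, h4]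
    ring
  rw [← sub_nonneg]
  have : (1 / 2 : ℂ) * trace (F ^ 2 * L ^ 2 + G ^ 2 * L ^ 2) - trace (F * L * G * L)
      = (1 / 2 : ℂ) * trace (B * Bᴴ) := by
    rw [trace_add, expand]; ring
  rw [this]
  exact mul_nonneg (by norm_num [Complex.le_def]) key
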